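/- There exists ε₀ ∈ (0,1) such that for every ε ∈ (0, ε₀], every θ ∈ [0, π], and all reals a, b with |a − cos θ| ≤ ε and |b − 1| ≤ ε, one has |arccos(a/b) − θ| ≤ 2·√(5ε). In other words, for ε sufficiently small, ρ_ε ≤ 2√(5ε) is a valid noise radius: arccos((cos θ ± ε)/(1 ± ε)) = θ ± 2√(5ε). -/

import Mathlib

open Real

set_option maxHeartbeats 1000000

lemma sin_aux_9 {c x : ℝ} (hc0 : 0 ≤ c) (hc : c ≤ π/2) (h1 : c ≤ x) (h2 : x ≤ π - c) :
    Real.sin c ≤ Real.sin x := by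
  have hpi := Real.pi_pos
  have m1 : c ∈ Set.Icc (-(π/2)) (π/2) := Set.mem_Icc.mpr ⟨by linarith, hc⟩
  rcases le_total x (π/2) with h | h
  · have m2 : x ∈ Set.Icc (-(π/2)) (π/2) := Set.mem_Icc.mpr ⟨by linarith, h⟩
    exact Real.strictMonoOn_sin.monotoneOn m1 m2 h1
  · have m2 : π - x ∈ Set.Icc (-(π/2)) (π/2) := Set.mem_Icc.mpr ⟨by linarith, by linarith⟩
    calc Real.sin c ≤ Real.sin (π - x) := Real.strictMonoOn_sin.monotoneOn m1 m2 (by linarith)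
      _ = Real.sin x := Real.sin_pi_sub x

lemma arccos_anti_9 {x y : ℝ} (h : x ≤ y) : Real.arccos y ≤ Real.arccos x := by
  rw [Real.arccos_eq_pi_div_two_sub_arcsin, Real.arccos_eq_pi_div_two_sub_arcsin]
  linarith [Real.monotone_arcsin h]

/-- For sufficiently small noise `ε`, `ρ_ε ≤ 2√(5ε)` is a valid noise radius:
`arccos((cos θ ± ε)/(1 ± ε)) = θ ± 2√(5ε)`. -/
theorem stmt_9 :
    ∃ ε0 : ℝ, 0 < ε0 ∧ ε0 < 1 ∧
      ∀ ε : ℝ, 0 < ε → ε ≤ ε0 →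
      ∀ θ : ℝ, θ ∈ Set.Icc 0 Real.pi →
      ∀ a b : ℝ, |a - Real.cos θ| ≤ ε → |b - 1| ≤ ε →
      |Real.arccos (a / b) - θ| ≤ 2 * Real.sqrt (5 * ε) := by
  refine ⟨1/100, by norm_num, by norm_num, ?_⟩
  intro ε hε hε0 θ hθ a b ha hb
  obtain ⟨hθ0, hθπ⟩ := hθ
  have hb' := abs_le.mp hb
  have ha' := abs_le.mp ha
  have hb1 : (99:ℝ)/100 ≤ b := by linarith [hb'.1]
  have hbpos : (0:ℝ) < b := by linarith
  set s := Real.sqrt (5*ε) with hs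
  have hs2 : s^2 = 5*ε := Real.sq_sqrt (by linarith)
  have hspos : 0 < s := Real.sqrt_pos.mpr (by linarith)
  have hs1 : s ≤ 1 := by nlinarith
  have hsin : s - s^3/4 < Real.sin s := by
    have h := Real.sin_gt_sub_cube hspos; have := pow_pos hspos 3; linarith
  have hsinpos : 0 < Real.sin s := by nlinarith
  have hsle : s ≤ π/2 := by nlinarith [Real.pi_gt_three]
  have hc1 := Real.neg_one_le_cos θ
  have hc2 := Real.cos_le_one θ
  have hab : |a/b - Real.cos θ| ≤ 21/10 * ε := by
    have key : |a - b * Real.cos θ| ≤ 2*ε := by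
      rw [abs_le]
      constructor <;> nlinarith [ha'.1, ha'.2, hb'.1, hb'.2]
    have heq : a/b - Real.cos θ = (a - b*Real.cos θ)/b := by field_simp
    rw [heq, abs_div, abs_of_pos hbpos, div_le_iff₀ hbpos]
    have := abs_le.mp key
    nlinarith [abs_nonneg (a - b*Real.cos θ), this.1, this.2]
  have habs := abs_le.mp hab
  have hkey : 21/10*ε ≤ 2 * Real.sin s * Real.sin s := by
    have h4 : 0 ≤ s - s^3/4 := by nlinarith
    have h5 : (s - s^3/4)^2 ≤ Real.sin s * Real.sin s := by nlinarith [hsin, h4]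
    have hs4 : s^4 = 25*ε^2 := by rw [show s^4 = (s^2)^2 by ring, hs2]; ring
    have hs6 : s^6 = 125*ε^3 := by rw [show s^6 = (s^2)^3 by ring, hs2]; ring
    have h6 : 21/20*ε ≤ (s - s^3/4)^2 := by
      nlinarith [hs2, hs4, hs6, mul_nonneg (by linarith : (0:ℝ) ≤ 1/100 - ε) hε.le,
        mul_nonneg (mul_nonneg hε.le hε.le) hε.le]
    linarith
  rw [abs_le]
  constructor
  · -- lower bound: θ - 2s ≤ arccos (a/b)
    rcases le_or_gt θ (2*s) with h | h
    · linarith [Real.arccos_nonneg (a/b)]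
    · have hsin_ge : Real.sin s ≤ Real.sin (θ - s) :=
        sin_aux_9 hspos.le hsle (by linarith) (by linarith)
      have hdiff : Real.cos (θ - 2*s) - Real.cos θ = 2 * Real.sin (θ - s) * Real.sin s := by
        have e1 : Real.cos (θ - 2*s) = Real.cos ((θ-s) - s) := by congr 1; ring
        have e2 : Real.cos θ = Real.cos ((θ-s) + s) := by congr 1; ring
        rw [e1, e2, Real.cos_sub, Real.cos_add]; ring
      have hcos : a/b ≤ Real.cos (θ - 2*s) := by
        nlinarith [habs.2, hsin_ge, hsinpos, hkey]
      have h2 := arccos_anti_9 hcos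
      rw [Real.arccos_cos (by linarith) (by linarith)] at h2
      linarith
  · -- upper bound: arccos (a/b) ≤ θ + 2s
    rcases le_or_gt π (θ + 2*s) with h | h
    · linarith [Real.arccos_le_pi (a/b)]
    · have hsin_ge : Real.sin s ≤ Real.sin (θ + s) :=
        sin_aux_9 hspos.le hsle (by linarith) (by linarith)
      have hdiff : Real.cos θ - Real.cos (θ + 2*s) = 2 * Real.sin (θ + s) * Real.sin s := by
        have g1 := Real.cos_add (θ+s) s
        have g2 := Real.cos_sub (θ+s) s
        rw [show θ + s + s = θ + 2*s by ring] at g1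
        rw [show θ + s - s = θ by ring] at g2
        linarith
      have hcos : Real.cos (θ + 2*s) ≤ a/b := by
        nlinarith [habs.1, hsin_ge, hsinpos, hkey]
      have h2 := arccos_anti_9 hcos
      rw [Real.arccos_cos (by linarith) h.le] at h2
      linarith
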